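/- For every k-dicritical digraph D and every subset S of its vertices, the number of connected components of D − S is at most (k−1)^{|S|} · 3^{binom(|S|,2)}. -/

import Mathlib

/-- A directed cycle of `A` within the set `s`, given by its first vertex `v`
and the list `l` of remaining vertices. Its length (number of vertices/arcs)
is `(v :: l).length`. -/
def IsCycleOn {V : Type} (A : V → V → Prop) (s : Set V) (v : V) (l : List V) : Prop :=
  (∀ x ∈ v :: l, x ∈ s) ∧ (v :: l).Nodup ∧ List.Chain A v (l ++ [v])

/-- `D[s]` admits a `k`-dicolouring: a colouring with no monochromatic directed cycle. -/
def DicolorableOn {V : Type} (A : V → V → Prop) (s : Set V) (k : ℕ) : Prop :=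
  ∃ φ : V → Fin k, ∀ v l, IsCycleOn A s v l → ¬ (∀ x ∈ v :: l, φ x = φ v)

/-- `D[s]` is `k`-dicritical: its dichromatic number is `k` (not `(k-1)`-dicolourable but
`k`-dicolourable) and removing any vertex or any arc makes it `(k-1)`-dicolourable. -/
def Dicritical {V : Type} (A : V → V → Prop) (s : Set V) (k : ℕ) : Prop :=
  ¬ DicolorableOn A s (k - 1) ∧ DicolorableOn A s k ∧
  (∀ v ∈ s, DicolorableOn A (s \ {v}) (k - 1)) ∧
  (∀ a b, a ∈ s → b ∈ s → A a b →
    DicolorableOn (fun x y => A x y ∧ ¬(x = a ∧ y = b)) s (k - 1))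

/-- The number of connected components of the subdigraph induced on `s`
(components of the underlying undirected graph), as the cardinality of the
quotient by the (equivalence closure of the) adjacency relation. -/
noncomputable def componentCount {V : Type} (A : V → V → Prop) (s : Set V) : ℕ :=
  Nat.card (Quot (fun a b : {v : V // v ∈ s} => A a.1 b.1 ∨ A b.1 a.1))

section Aux
variable {V : Type} {A : V → V → Prop}


lemma first_decomp (p : V → Prop) : ∀ (l : List V), (∃ x ∈ l, p x) →
    ∃ l₁ x l₂, l = l₁ ++ x :: l₂ ∧ (∀ y ∈ l₁, ¬ p y) ∧ p x := by
  intro l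
  induction l with
  | nil => rintro ⟨x, hx, -⟩; cases hx
  | cons a t ih =>
    intro h
    by_cases ha : p a
    · exact ⟨[], a, t, rfl, by simp, ha⟩
    · obtain ⟨x, hx, hpx⟩ := h
      rcases List.mem_cons.1 hx with rfl | hx
      · exact absurd hpx ha
      · obtain ⟨l₁, x, l₂, rfl, h1, h2⟩ := ih ⟨x, hx, hpx⟩
        refine ⟨a :: l₁, x, l₂, rfl, ?_, h2⟩
        rintro y hy
        rcases List.mem_cons.1 hy with rfl | hy
        · exact ha
        · exact h1 y hy

lemma prefix_decomp (p : V → Prop) : ∀ (l : List V),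
    ∃ m r, l = m ++ r ∧ (∀ y ∈ m, p y) ∧ (∀ y t, r = y :: t → ¬ p y) := by
  intro l
  induction l with
  | nil => exact ⟨[], [], rfl, by simp, by rintro y t h; cases h⟩
  | cons a t ih =>
    by_cases ha : p a
    · obtain ⟨m, r, rfl, h1, h2⟩ := ih
      refine ⟨a :: m, r, rfl, ?_, h2⟩
      rintro y hy
      rcases List.mem_cons.1 hy with rfl | hy
      · exact ha
      · exact h1 y hy
    · refine ⟨[], a :: t, rfl, by simp, ?_⟩
      rintro y t' h
      cases h
      exact ha

lemma dup_decomp : ∀ (l : List V), ¬ l.Nodup → ∃ l₁ x l₂ l₃, l = l₁ ++ x :: l₂ ++ x :: l₃ := by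
  intro l
  induction l with
  | nil => intro h; exact absurd List.nodup_nil h
  | cons a t ih =>
    intro h
    by_cases hat : a ∈ t
    · obtain ⟨l₂, l₃, rfl⟩ := List.append_of_mem hat
      exact ⟨[], a, l₂, l₃, rfl⟩
    · have hnt : ¬ t.Nodup := fun hn => h (List.nodup_cons.2 ⟨hat, hn⟩)
      obtain ⟨l₁, x, l₂, l₃, rfl⟩ := ih hnt
      exact ⟨a :: l₁, x, l₂, l₃, rfl⟩

lemma cycle_of_closed_walk :
    ∀ (n : ℕ) (l : List V) (u : V), l.length ≤ n → List.Chain A u (l ++ [u]) →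
    ∃ v l', (v :: l').Nodup ∧ List.Chain A v (l' ++ [v]) ∧ ∀ x ∈ v :: l', x ∈ u :: l := by
  intro n
  induction n with
  | zero =>
    intro l u hl hc
    have hnil : l = [] := List.length_eq_zero_iff.1 (Nat.le_zero.1 hl)
    subst hnil
    exact ⟨u, [], List.nodup_singleton u, hc, by simp⟩
  | succ n ih =>
    intro l u hl hc
    by_cases hnd : (u :: l).Nodup
    · exact ⟨u, l, hnd, hc, fun x hx => hx⟩
    · obtain ⟨l₁, x, l₂, l₃, he⟩ := dup_decomp _ hnd
      cases l₁ with
      | nil =>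
        simp only [List.nil_append, List.cons.injEq] at he
        obtain ⟨rfl, rfl⟩ := he
        have hc' : List.Chain A u (l₂ ++ u :: (l₃ ++ [u])) := by
          simpa only [List.append_eq, List.append_assoc, List.cons_append] using hc
        have hc₂ : List.Chain A u (l₂ ++ [u]) := (List.isChain_cons_split.1 hc').1
        have hlen : l₂.length ≤ n := by
          simp only [List.append_eq, List.length_append, List.length_cons] at hl
          omega
        obtain ⟨v, l', h1, h2, h3⟩ := ih l₂ u hlen hc₂
        exact ⟨v, l', h1, h2, fun y hy => by
          rcases List.mem_cons.1 (h3 y hy) with rfl | hy'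
          · exact List.mem_cons_self
          · exact List.mem_cons_of_mem _ (by simp [hy'])⟩
      | cons b l₁' =>
        simp only [List.cons_append, List.cons.injEq] at he
        obtain ⟨rfl, rfl⟩ := he
        have hc' : List.Chain A u (l₁' ++ x :: (l₂ ++ x :: (l₃ ++ [u]))) := by
          simpa only [List.append_eq, List.append_assoc, List.cons_append] using hc
        have hc₂ : List.Chain A x (l₂ ++ x :: (l₃ ++ [u])) := (List.isChain_cons_split.1 hc').2
        have hc₃ : List.Chain A x (l₂ ++ [x]) := (List.isChain_cons_split.1 hc₂).1
        have hlen : l₂.length ≤ n := by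
          simp only [List.append_eq, List.length_append, List.length_cons] at hl
          omega
        obtain ⟨v, l', h1, h2, h3⟩ := ih l₂ x hlen hc₃
        refine ⟨v, l', h1, h2, fun y hy => ?_⟩
        rcases List.mem_cons.1 (h3 y hy) with rfl | hy'
        · exact List.mem_cons_of_mem _ (by simp)
        · exact List.mem_cons_of_mem _ (by simp [hy'])

lemma rotate_closed_walk {u a : V} {l : List V} (hc : List.Chain A u (l ++ [u]))
    (ha : a ∈ u :: l) :
    ∃ l', List.Chain A a (l' ++ [a]) ∧ (a :: l').Perm (u :: l) := by
  rcases List.mem_cons.1 ha with rfl | ha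
  · exact ⟨l, hc, List.Perm.refl _⟩
  · obtain ⟨l₁, l₂, rfl⟩ := List.append_of_mem ha
    have hc' : List.Chain A u (l₁ ++ a :: (l₂ ++ [u])) := by
      rwa [List.append_assoc] at hc
    obtain ⟨h1, h2⟩ := List.isChain_cons_split.1 hc'
    refine ⟨l₂ ++ u :: l₁, ?_, ?_⟩
    · have : List.Chain A a (l₂ ++ u :: (l₁ ++ [a])) := List.isChain_cons_split.2 ⟨h2, h1⟩
      simpa [List.append_assoc] using this
    · have h3 : (a :: l₂ ++ u :: l₁).Perm (u :: l₁ ++ a :: l₂) := List.perm_append_comm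
      simpa [List.append_assoc] using h3

lemma last_arc : ∀ (m : List V) (x y : V), List.Chain A x (m ++ [y]) → ∃ e ∈ x :: m, A e y := by
  intro m
  induction m with
  | nil =>
    intro x y hc
    exact ⟨x, by simp, List.isChain_pair.1 hc⟩
  | cons b t ih =>
    intro x y hc
    rw [List.cons_append] at hc
    obtain ⟨e, he, hA⟩ := ih b y (List.chain_cons.1 hc).2
    exact ⟨e, List.mem_cons_of_mem _ he, hA⟩

lemma no_mono_closed_walk {s : Set V} {m : ℕ} {φ : V → Fin m}
    (hφ : ∀ v l, IsCycleOn A s v l → ¬ (∀ x ∈ v :: l, φ x = φ v))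
    {c : Fin m} {u : V} {l : List V} (hc : List.Chain A u (l ++ [u]))
    (hall : ∀ x ∈ u :: l, x ∈ s ∧ φ x = c) : False := by
  obtain ⟨v, l', hnd, hch, hsub⟩ := cycle_of_closed_walk l.length l u le_rfl hc
  refine hφ v l' ⟨fun x hx => (hall x (hsub x hx)).1, hnd, hch⟩ (fun x hx => ?_)
  rw [(hall x (hsub x hx)).2, (hall v (hsub v List.mem_cons_self)).2]

/-- a monochromatic directed walk from `u` to `v` avoiding `C`. -/
def EProp (A : V → V → Prop) (C : Set V) {m : ℕ} (φ : V → Fin m) (u v : V) : Prop :=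
  ∃ l : List V, List.Chain A u (l ++ [v]) ∧ ∀ x ∈ u :: (l ++ [v]), x ∉ C ∧ φ x = φ u

lemma not_both {C : Set V} {w : V} (hw : w ∈ C) {m : ℕ} {φ : V → Fin m}
    (hφ : ∀ v l, IsCycleOn A (Set.univ \ {w}) v l → ¬ (∀ x ∈ v :: l, φ x = φ v))
    {u v : V} (h1 : EProp A C φ u v) (h2 : EProp A C φ v u) : False := by
  obtain ⟨m₁, hc₁, hp₁⟩ := h1
  obtain ⟨m₂, hc₂, hp₂⟩ := h2
  have hvu : φ v = φ u := (hp₁ v (by simp)).2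
  refine no_mono_closed_walk hφ (c := φ u) (u := u) (l := m₁ ++ v :: m₂) ?_ ?_
  · have : List.Chain A u (m₁ ++ v :: (m₂ ++ [u])) := List.isChain_cons_split.2 ⟨hc₁, hc₂⟩
    rw [List.append_assoc]
    exact this
  · intro x hx
    have key : (x ∉ C ∧ φ x = φ u) := by
      rcases List.mem_cons.1 hx with rfl | hx'
      · exact ⟨fun h => (hp₁ x (by simp)).1 h, (hp₁ x (by simp)).2⟩
      · rcases List.mem_append.1 hx' with h | h
        · exact (hp₁ x (by simp [h]))
        · rcases List.mem_cons.1 h with rfl | h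
          · exact ⟨(hp₂ x (by simp)).1, hvu⟩
          · obtain ⟨hC, hco⟩ := hp₂ x (by simp [h])
            exact ⟨hC, hvu ▸ hco⟩
    exact ⟨⟨trivial, fun hxw => key.1 (by rwa [Set.mem_singleton_iff.1 hxw])⟩, key.2⟩

lemma st_helper {Eab₁ Eba₁ Eab₂ Eba₂ : Prop}
    [Decidable Eab₁] [Decidable Eba₁] [Decidable Eab₂] [Decidable Eba₂]
    (x₁ : ¬(Eab₁ ∧ Eba₁)) (x₂ : ¬(Eab₂ ∧ Eba₂))
    (h : (if Eab₁ then (1 : Fin 3) else if Eba₁ then 2 else 0)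
       = (if Eab₂ then (1 : Fin 3) else if Eba₂ then 2 else 0)) :
    (Eab₂ → Eab₁) ∧ (Eba₂ → Eba₁) := by
  split_ifs at h <;> simp_all


lemma main_ind {m : ℕ} (A : V → V → Prop) (S : Finset V)
    (C₁ C₂ : Set V) [DecidablePred (· ∈ C₁)] (φ₁ φ₂ : V → Fin m) (w₁ w₂ : V)
    (hC₁S : ∀ x ∈ C₁, x ∉ S) (hC₂S : ∀ x ∈ C₂, x ∉ S)
    (hdisj : ∀ x, x ∈ C₁ → x ∉ C₂)
    (hw₁ : w₁ ∈ C₁) (hw₂ : w₂ ∈ C₂)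
    (hbd : ∀ x y, x ∈ C₁ → (A x y ∨ A y x) → y ∉ S → y ∈ C₁)
    (hφ₁ : ∀ v l, IsCycleOn A (Set.univ \ {w₁}) v l → ¬ (∀ x ∈ v :: l, φ₁ x = φ₁ v))
    (hφ₂ : ∀ v l, IsCycleOn A (Set.univ \ {w₂}) v l → ¬ (∀ x ∈ v :: l, φ₂ x = φ₂ v))
    (hagree : ∀ x, x ∈ S → φ₁ x = φ₂ x)
    (htrans : ∀ u v : V, u ∈ S → v ∈ S → u ≠ v → EProp A C₂ φ₂ u v → EProp A C₁ φ₁ u v)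
    (c : Fin m) :
    ∀ (n : ℕ) (u : V) (l : List V), List.Chain A u (l ++ [u]) →
      (∀ x ∈ u :: l, (if x ∈ C₁ then φ₂ x else φ₁ x) = c) →
      (u :: l).countP (fun x => decide (x ∈ C₁)) ≤ n → False := by
  have hpsi₁ : ∀ x, x ∉ C₁ → (if x ∈ C₁ then φ₂ x else φ₁ x) = φ₁ x := fun x hx => if_neg hx
  have hpsi₂ : ∀ x, x ∈ C₁ → (if x ∈ C₁ then φ₂ x else φ₁ x) = φ₂ x := fun x hx => if_pos hx
  intro n
  induction n with
  | zero =>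
    intro u l hc hm hcnt
    have h0 : ∀ x ∈ u :: l, x ∉ C₁ := by
      intro x hx hxC
      have := List.countP_eq_zero.1 (Nat.le_zero.1 hcnt) x hx
      simp [hxC] at this
    refine no_mono_closed_walk hφ₁ (c := c) hc (fun x hx => ⟨⟨trivial, ?_⟩, ?_⟩)
    · intro hxw
      exact h0 x hx (by rwa [Set.mem_singleton_iff.1 hxw])
    · rw [← hpsi₁ x (h0 x hx)]
      exact hm x hx
  | succ n ih =>
    intro u l hc hm hcnt
    by_cases hin : ∀ x ∈ u :: l, x ∈ C₁ ∨ x ∈ S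
    · -- whole walk inside C₁ ∪ S : contradiction with φ₂ on D - w₂
      refine no_mono_closed_walk hφ₂ (c := c) hc (fun x hx => ⟨⟨trivial, ?_⟩, ?_⟩)
      · intro hxw
        have hxw' : x = w₂ := Set.mem_singleton_iff.1 hxw
        rcases hin x hx with h | h
        · exact hdisj x h (show x ∈ C₂ by rw [hxw']; exact hw₂)
        · exact hC₂S x (show x ∈ C₂ by rw [hxw']; exact hw₂) h
      · rcases hin x hx with h | h
        · rw [← hpsi₂ x h]; exact hm x hx
        · rw [← hagree x h, ← hpsi₁ x (fun hC => hC₁S x hC h)]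
          exact hm x hx
    · push_neg at hin
      obtain ⟨a, haw, haC, haS⟩ := hin
      obtain ⟨l', hc', hperm⟩ := rotate_closed_walk hc haw
      have hm' : ∀ x ∈ a :: l', (if x ∈ C₁ then φ₂ x else φ₁ x) = c :=
        fun x hx => hm x (hperm.subset hx)
      have hcnt' : (a :: l').countP (fun x => decide (x ∈ C₁)) ≤ n + 1 := by
        rw [hperm.countP_eq]; exact hcnt
      by_cases hC : ∃ x ∈ l', x ∈ C₁
      · -- surgery
        obtain ⟨l₁, x₀, l₂, rfl, hl₁, hx₀⟩ := first_decomp (· ∈ C₁) l' hC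
        obtain ⟨m₁, r, rfl, hm₁, hr⟩ := prefix_decomp (· ∈ C₁) l₂
        rcases l₁.eq_nil_or_concat' with rfl | ⟨l₁', u', rfl⟩
        · -- head arc a → x₀ forces a ∈ C₁ : contradiction
          have hch : List.Chain A a (x₀ :: ((m₁ ++ r) ++ [a])) := by simpa using hc'
          exact haC (hbd x₀ a hx₀ (Or.inr (List.chain_cons.1 hch).1) haS)
        have hu'C : u' ∉ C₁ := hl₁ u' (by simp)
        have hcc : List.Chain A a (l₁' ++ u' :: (x₀ :: ((m₁ ++ r) ++ [a]))) := by
          simpa only [List.append_assoc, List.cons_append, List.singleton_append,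
            List.nil_append] using hc'
        obtain ⟨hch1, hch2⟩ := List.isChain_cons_split.1 hcc
        have hAu'x₀ : A u' x₀ := (List.chain_cons.1 hch2).1
        have hu'S : u' ∈ S := by
          by_contra h
          exact hu'C (hbd x₀ u' hx₀ (Or.inr hAu'x₀) h)
        have hu'mem : u' ∈ a :: ((l₁' ++ [u']) ++ x₀ :: (m₁ ++ r)) := by simp
        have hu'c : φ₁ u' = c := by
          have := hm' u' hu'mem
          rwa [hpsi₁ u' hu'C] at this
        rcases r with - | ⟨v, r'⟩
        · -- block reaches the end of the walk: its last vertex has an arc to a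
          have hch3 : List.Chain A x₀ (m₁ ++ [a]) := by
            have := (List.chain_cons.1 hch2).2
            simpa [List.Chain] using this
          obtain ⟨e, he, hea⟩ := last_arc m₁ x₀ a hch3
          have heC : e ∈ C₁ := by
            rcases List.mem_cons.1 he with rfl | he'
            · exact hx₀
            · exact hm₁ e he'
          exact haC (hbd e a heC (Or.inl hea) haS)
        · have hvC : v ∉ C₁ := hr v r' rfl
          have hch2' : List.Chain A u' ((x₀ :: m₁) ++ (v :: (r' ++ [a]))) := by
            simpa only [List.Chain, List.append_assoc, List.cons_append] using hch2
          obtain ⟨hblk, htail⟩ := List.isChain_cons_split.1 hch2'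
          have hch4 : List.Chain A x₀ (m₁ ++ [v]) :=
            (List.chain_cons.1 (show List.Chain A u' (x₀ :: (m₁ ++ [v])) by
              simpa only [List.Chain, List.cons_append] using hblk)).2
          obtain ⟨e, he, hev⟩ := last_arc m₁ x₀ v hch4
          have heC : e ∈ C₁ := by
            rcases List.mem_cons.1 he with rfl | he'
            · exact hx₀
            · exact hm₁ e he'
          have hvS : v ∈ S := by
            by_contra h
            exact hvC (hbd e v heC (Or.inl hev) h)
          have hvmem : v ∈ a :: ((l₁' ++ [u']) ++ x₀ :: (m₁ ++ v :: r')) := by simp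
          have hvc : φ₁ v = c := by
            have := hm' v hvmem
            rwa [hpsi₁ v hvC] at this
          have hblkC : ∀ x ∈ x₀ :: m₁, x ∈ C₁ := by
            intro x hx
            rcases List.mem_cons.1 hx with rfl | hx'
            · exact hx₀
            · exact hm₁ x hx'
          have hblkc : ∀ x ∈ x₀ :: m₁, φ₂ x = c := by
            intro x hx
            have hxC := hblkC x hx
            have hxmem : x ∈ a :: ((l₁' ++ [u']) ++ x₀ :: (m₁ ++ v :: r')) := by
              rcases List.mem_cons.1 hx with rfl | hx'
              · simp
              · simp [hx']
            have := hm' x hxmem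
            rwa [hpsi₂ x hxC] at this
          have hφ₂u' : φ₂ u' = c := by rw [← hagree u' hu'S]; exact hu'c
          by_cases huv : u' = v
          · -- the walk u' → block → v = u' is closed and φ₂-monochromatic, avoiding w₂
            rw [← huv] at hblk
            refine no_mono_closed_walk hφ₂ (c := c) (u := u') (l := x₀ :: m₁) hblk
              (fun x hx => ⟨⟨trivial, ?_⟩, ?_⟩)
            · intro hxw
              have hxw' : x = w₂ := Set.mem_singleton_iff.1 hxw
              rcases List.mem_cons.1 hx with rfl | h
              · exact hC₂S x (show x ∈ C₂ by rw [hxw']; exact hw₂) hu'S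
              · exact hdisj x (hblkC x h) (show x ∈ C₂ by rw [hxw']; exact hw₂)
            · rcases List.mem_cons.1 hx with rfl | h
              · exact hφ₂u'
              · exact hblkc x h
          · -- transfer the block path through the other component's colouring
            have hE2 : EProp A C₂ φ₂ u' v := by
              refine ⟨x₀ :: m₁, hblk, ?_⟩
              intro x hx
              rcases List.mem_cons.1 hx with rfl | hx'
              · exact ⟨fun h => hC₂S x h hu'S, rfl⟩
              · rcases List.mem_append.1 hx' with h | h
                · refine ⟨hdisj x (hblkC x h), ?_⟩
                  rw [hblkc x h, hφ₂u']
                · have hxv : x = v := List.mem_singleton.1 h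
                  subst hxv
                  refine ⟨fun h => hC₂S x h hvS, ?_⟩
                  rw [← hagree x hvS, hvc, hφ₂u']
            obtain ⟨m', hcm', hpm'⟩ := htrans u' v hu'S hvS huv hE2
            have hnew : List.Chain A a (l₁' ++ u' :: (m' ++ v :: (r' ++ [a]))) :=
              List.isChain_cons_split.2 ⟨hch1, List.isChain_cons_split.2 ⟨hcm', htail⟩⟩
            have hmono : ∀ x ∈ a :: (l₁' ++ u' :: (m' ++ v :: r')),
                (if x ∈ C₁ then φ₂ x else φ₁ x) = c := by
              intro x hx
              rcases List.mem_cons.1 hx with rfl | hx'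
              · exact hm' x (by simp)
              · rcases List.mem_append.1 hx' with h | h
                · exact hm' x (by simp [h])
                · rcases List.mem_cons.1 h with rfl | h
                  · exact hm' x hu'mem
                  · rcases List.mem_append.1 h with h | h
                    · have hxp := hpm' x (by simp [h])
                      rw [hpsi₁ x hxp.1, hxp.2]
                      exact hu'c
                    · rcases List.mem_cons.1 h with rfl | h
                      · exact hm' x hvmem
                      · exact hm' x (by simp [h])
            have hcount : (a :: (l₁' ++ u' :: (m' ++ v :: r'))).countP
                (fun x => decide (x ∈ C₁)) ≤ n := by
              have hm'0 : m'.countP (fun x => decide (x ∈ C₁)) = 0 :=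
                List.countP_eq_zero.2 (fun x hx => by
                  simpa using (hpm' x (by simp [hx])).1)
              have hb : (x₀ :: m₁).countP (fun x => decide (x ∈ C₁))
                  = m₁.countP (fun x => decide (x ∈ C₁)) + 1 := by
                simp [List.countP_cons, hx₀]
              have e1 : a :: ((l₁' ++ [u']) ++ x₀ :: (m₁ ++ v :: r'))
                  = (a :: (l₁' ++ [u'])) ++ ((x₀ :: m₁) ++ (v :: r')) := by simp
              have e2 : a :: (l₁' ++ u' :: (m' ++ v :: r'))
                  = (a :: (l₁' ++ [u'])) ++ (m' ++ (v :: r')) := by simp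
              have hold := hcnt'
              rw [e1, List.countP_append, List.countP_append, hb] at hold
              rw [e2, List.countP_append, List.countP_append, hm'0]
              omega
            exact ih a (l₁' ++ u' :: (m' ++ v :: r'))
              (by simpa only [List.append_assoc, List.cons_append] using hnew) hmono hcount
      · -- no vertex of the rotated walk lies in C₁
        push_neg at hC
        have h0 : (a :: l').countP (fun x => decide (x ∈ C₁)) = 0 := by
          refine List.countP_eq_zero.2 (fun x hx => ?_)
          rcases List.mem_cons.1 hx with rfl | hx'
          · simpa using haC
          · simpa using hC x hx'
        exact ih a l' hc' hm' (by omega)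


end Aux

theorem stmt1 {V : Type} [Fintype V] (A : V → V → Prop) (k : ℕ)
    (hirr : ∀ v, ¬ A v v) (hcrit : Dicritical A Set.univ k) (S : Finset V) :
    componentCount A {v | v ∉ S} ≤ (k - 1) ^ S.card * 3 ^ Nat.choose S.card 2 := by
  classical
  by_contra hlt
  push_neg at hlt
  set s : Set V := {v | v ∉ S} with hs
  set r : {v : V // v ∈ s} → {v : V // v ∈ s} → Prop :=
    (fun a b => A a.1 b.1 ∨ A b.1 a.1) with hrdef
  -- the quotient is finite
  haveI : Finite (Quot r) := Finite.of_surjective (Quot.mk r) Quot.mk_surjective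
  haveI : Fintype (Quot r) := Fintype.ofFinite _
  -- data attached to each component
  have hout : ∀ q : Quot r, Quot.mk r (Quot.out q) = q := fun q => Quot.out_eq q
  set w : Quot r → V := fun q => (Quot.out q).1 with hwdef
  set Cset : Quot r → Set V := fun q => {v : V | ∃ h : v ∈ s, Quot.mk r ⟨v, h⟩ = q}
    with hCdef
  have hwC : ∀ q, w q ∈ Cset q := by
    intro q
    refine ⟨(Quot.out q).2, ?_⟩
    rw [Subtype.coe_eta]
    exact hout q
  have hwS : ∀ q, w q ∉ S := fun q => (Quot.out q).2
  have hCS : ∀ q, ∀ x ∈ Cset q, x ∉ S := fun q x hx => hx.1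
  have hbd : ∀ q, ∀ x y, x ∈ Cset q → (A x y ∨ A y x) → y ∉ S → y ∈ Cset q := by
    rintro q x y ⟨hx, hq⟩ hxy hy
    refine ⟨hy, ?_⟩
    rw [← hq]
    exact Quot.sound (hxy.symm)
  -- the (k-1)-dicolourings of D - w q
  have hcol : ∀ q : Quot r, DicolorableOn A (Set.univ \ {w q}) (k - 1) :=
    fun q => hcrit.2.2.1 (w q) (Set.mem_univ _)
  set φ : Quot r → V → Fin (k - 1) := fun q => (hcol q).choose with hφdef
  have hφ : ∀ q, ∀ v l, IsCycleOn A (Set.univ \ {w q}) v l →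
      ¬ (∀ x ∈ v :: l, (φ q) x = (φ q) v) := fun q => (hcol q).choose_spec
  -- directional mono-path existence and exclusivity
  have hexcl : ∀ q : Quot r, ∀ u v : V,
      EProp A (Cset q) (φ q) u v → EProp A (Cset q) (φ q) v u → False :=
    fun q u v h1 h2 => not_both (hwC q) (hφ q) h1 h2
  -- the trace map
  set st : Quot r → V → V → Fin 3 := fun q a b =>
    if EProp A (Cset q) (φ q) a b then 1 else if EProp A (Cset q) (φ q) b a then 2 else 0
    with hstdef
  set F : Quot r → (({x : V // x ∈ S} → Fin (k - 1)) ×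
      ({p : Sym2 {x : V // x ∈ S} // ¬ p.IsDiag} → Fin 3)) := fun q =>
    (fun x => φ q x.1,
     fun p => st q (Quot.out p.1).1.1 (Quot.out p.1).2.1) with hFdef
  have hcardT : Fintype.card (({x : V // x ∈ S} → Fin (k - 1)) ×
      ({p : Sym2 {x : V // x ∈ S} // ¬ p.IsDiag} → Fin 3))
      = (k - 1) ^ S.card * 3 ^ Nat.choose S.card 2 := by
    rw [Fintype.card_prod, Fintype.card_fun, Fintype.card_fun]
    rw [Fintype.card_fin, Fintype.card_fin, Fintype.card_coe]
    rw [Sym2.card_subtype_not_diag, Fintype.card_coe]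
  have hcardlt : Fintype.card (({x : V // x ∈ S} → Fin (k - 1)) ×
      ({p : Sym2 {x : V // x ∈ S} // ¬ p.IsDiag} → Fin 3)) < Fintype.card (Quot r) := by
    rw [hcardT]
    have hcc : componentCount A s = Fintype.card (Quot r) := by
      rw [show componentCount A s = Nat.card (Quot r) from rfl, Nat.card_eq_fintype_card]
    omega
  obtain ⟨q₁, q₂, hne, hFeq⟩ := Fintype.exists_ne_map_eq_of_card_lt F hcardlt
  have hdisj : ∀ x, x ∈ Cset q₁ → x ∉ Cset q₂ := by
    rintro x ⟨h1, e1⟩ ⟨h2, e2⟩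
    exact hne (by rw [← e1, ← e2])
  have hagree : ∀ x, x ∈ S → φ q₁ x = φ q₂ x := by
    intro x hx
    exact congrFun (congrArg Prod.fst hFeq) ⟨x, hx⟩
  have htrans : ∀ u v : V, u ∈ S → v ∈ S → u ≠ v →
      EProp A (Cset q₂) (φ q₂) u v → EProp A (Cset q₁) (φ q₁) u v := by
    intro u v hu hv huv hE
    set p : Sym2 {x : V // x ∈ S} := s(⟨u, hu⟩, ⟨v, hv⟩) with hpdef
    have hpd : ¬ p.IsDiag := by
      rw [hpdef, Sym2.mk_isDiag_iff]
      exact fun h => huv (congrArg Subtype.val h)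
    have hst := congrFun (congrArg Prod.snd hFeq) ⟨p, hpd⟩
    simp only [hFdef] at hst
    -- hst : st q₁ a b = st q₂ a b  where (a,b) = Quot.out p
    have hrep : s((Quot.out p).1, (Quot.out p).2) = s((⟨u, hu⟩ : {x // x ∈ S}), ⟨v, hv⟩) := by
      show Quot.mk _ (Quot.out p) = _
      exact Quot.out_eq p
    rw [Sym2.eq_iff] at hrep
    have key : ∀ a b : V,
        st q₁ a b = st q₂ a b →
        (EProp A (Cset q₂) (φ q₂) a b → EProp A (Cset q₁) (φ q₁) a b) ∧
        (EProp A (Cset q₂) (φ q₂) b a → EProp A (Cset q₁) (φ q₁) b a) := by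
      intro a b h
      rw [hstdef] at h
      exact st_helper (fun hh => hexcl q₁ a b hh.1 hh.2) (fun hh => hexcl q₂ a b hh.1 hh.2) h
    rcases hrep with ⟨h1, h2⟩ | ⟨h1, h2⟩
    · have ha : (Quot.out p).1.1 = u := congrArg Subtype.val h1
      have hb : (Quot.out p).2.1 = v := congrArg Subtype.val h2
      rw [ha, hb] at hst
      exact (key u v hst).1 hE
    · have ha : (Quot.out p).1.1 = v := congrArg Subtype.val h1
      have hb : (Quot.out p).2.1 = u := congrArg Subtype.val h2
      rw [ha, hb] at hst
      exact (key v u hst).2 hE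
  -- the merged colouring contradicts non-(k-1)-dicolourability
  refine hcrit.1 ⟨fun x => if x ∈ Cset q₁ then φ q₂ x else φ q₁ x, ?_⟩
  intro v l hcyc hmono
  exact main_ind A S (Cset q₁) (Cset q₂) (φ q₁) (φ q₂) (w q₁) (w q₂)
    (hCS q₁) (hCS q₂) hdisj (hwC q₁) (hwC q₂) (hbd q₁) (hφ q₁) (hφ q₂) hagree htrans
    (if v ∈ Cset q₁ then φ q₂ v else φ q₁ v)
    ((v :: l).countP (fun x => decide (x ∈ Cset q₁))) v l hcyc.2.2 hmono le_rfl
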